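/- Let $\mu_0$ be a probability measure on $[0,\infty)$ with continuous distribution function and $p := \mu_0([0,T]) \in (0,1)$, and let $\ell \in (0,1)$. Among all nondecreasing absolutely continuous paths $\varphi : [0,T] \to [0,1]$ with $\varphi(0) = 0$ and $\varphi(T) = \ell$ realizable as $\varphi(t) = \nu([0,t])$ for a probability measure $\nu \ll \mu_0$, the relative entropy cost $H(\nu,\mu_0)$ is minimized by the proportional path $\varphi^*(t) = \ell\,\mu_0([0,t])/p$, with minimal cost $\ell\ln(\ell/p) + (1-\ell)\ln((1-\ell)/(1-p))$. -/

import Mathlib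

open MeasureTheory Real

/-- Relative entropy cost of a default-time law `ν` on `[0,∞)` after collapsing the
mass beyond `T` to the abstract point `⋆`:
`H_T(ν,μ₀) = ∫_{[0,T]} ln(dν/dμ₀) dν + ν((T,∞)) ln(ν((T,∞))/μ₀((T,∞)))`. -/
noncomputable def collapsedEntropy (T : ℝ) (ν μ₀ : Measure ℝ) : ℝ :=
  (∫ x in Set.Icc 0 T, MeasureTheory.llr ν μ₀ x ∂ν)
    + (1 - (ν (Set.Icc 0 T)).toReal)
      * Real.log ((1 - (ν (Set.Icc 0 T)).toReal) / (1 - (μ₀ (Set.Icc 0 T)).toReal))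

/-- Gibbs' inequality (set version): the relative entropy integral over a set `A`
is at least `ν(A) log (ν(A)/μ(A))`. -/
lemma key_gibbs {α : Type*} {mα : MeasurableSpace α} (ν μ : Measure α)
    [IsFiniteMeasure ν] [IsFiniteMeasure μ] (hνμ : ν ≪ μ)
    (A : Set α) {a b : ℝ} (ha : 0 < a) (hb : 0 < b)
    (hνA : (ν A).toReal = a) (hμA : (μ A).toReal = b)
    (hint : Integrable (MeasureTheory.llr ν μ) (ν.restrict A)) :
    a * Real.log (a / b) ≤ ∫ x in A, MeasureTheory.llr ν μ x ∂ν := by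
  set g : α → ℝ := fun x => (μ.rnDeriv ν x).toReal with hg
  have hg_int : Integrable g (ν.restrict A) :=
    Measure.integrableOn_toReal_rnDeriv (measure_ne_top μ A)
  have hab : 0 < a / b := div_pos ha hb
  have h_ae : ∀ᵐ x ∂ν, 1 - (a / b) * g x ≤ llr ν μ x - Real.log (a / b) := by
    filter_upwards [Measure.rnDeriv_pos hνμ, hνμ.ae_le (Measure.rnDeriv_lt_top ν μ),
      Measure.inv_rnDeriv hνμ] with x h1 h2 h3
    have hr : 0 < (ν.rnDeriv μ x).toReal := ENNReal.toReal_pos h1.ne' h2.ne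
    have hgx : g x = ((ν.rnDeriv μ x).toReal)⁻¹ := by
      simp only [hg]
      rw [← h3, Pi.inv_apply, ENNReal.toReal_inv]
    have hllr : llr ν μ x = Real.log (ν.rnDeriv μ x).toReal := rfl
    have hgpos : 0 < g x := by rw [hgx]; exact inv_pos.mpr hr
    have hlog : Real.log ((a / b) * g x) ≤ (a / b) * g x - 1 :=
      Real.log_le_sub_one_of_pos (mul_pos hab hgpos)
    have hσ : Real.log ((a / b) * g x)
        = Real.log (a / b) - Real.log (ν.rnDeriv μ x).toReal := by
      rw [Real.log_mul hab.ne' (by rw [hgx]; exact (inv_pos.mpr hr).ne'), hgx,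
        Real.log_inv]
      ring
    rw [hσ] at hlog
    rw [hllr]
    linarith
  have h_ae' : ∀ᵐ x ∂(ν.restrict A),
      1 - (a / b) * g x ≤ llr ν μ x - Real.log (a / b) := ae_restrict_of_ae h_ae
  have h_int_left : Integrable (fun x => 1 - (a / b) * g x) (ν.restrict A) :=
    (integrable_const 1).sub (hg_int.const_mul _)
  have h_int_right : Integrable (fun x => llr ν μ x - Real.log (a / b)) (ν.restrict A) :=
    hint.sub (integrable_const _)
  have h := integral_mono_ae h_int_left h_int_right h_ae'
  rw [integral_sub (integrable_const 1) (hg_int.const_mul _),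
    integral_sub hint (integrable_const _), integral_const, integral_const,
    integral_const_mul] at h
  have hres : ((ν.restrict A) Set.univ).toReal = a := by
    rw [Measure.restrict_apply_univ, hνA]
  rw [measureReal_def, hres] at h
  have hIb : ∫ x in A, g x ∂ν ≤ b := by
    rw [← hμA]
    exact Measure.setIntegral_toReal_rnDeriv_le (measure_ne_top μ A)
  have h2 : (a / b) * ∫ x in A, g x ∂ν ≤ (a / b) * b := by
    exact mul_le_mul_of_nonneg_left hIb hab.le
  have h3 : (a / b) * b = a := by field_simp
  simp only [smul_eq_mul] at h
  linarith

/-- among probability measures `ν ≪ μ₀` with `ν([0,T]) = ℓ`, the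
entropy cost `H_T` is minimized by the measure inducing the proportional path
`φ*(t) = ℓ μ₀([0,t])/p`, with minimal cost the Bernoulli relative entropy. -/
theorem optimal_path_independent_case
    (T : ℝ) (hT : 0 < T)
    (μ₀ : Measure ℝ) [IsProbabilityMeasure μ₀]
    (hsupp : μ₀ (Set.Iio 0) = 0)
    (hcdf : Continuous fun t : ℝ => (μ₀ (Set.Iic t)).toReal)
    (p ℓ : ℝ) (hp : p ∈ Set.Ioo (0:ℝ) 1) (hℓ : ℓ ∈ Set.Ioo (0:ℝ) 1)
    (hμT : (μ₀ (Set.Icc 0 T)).toReal = p)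
    (νstar : Measure ℝ)
    (hνstar : νstar
      = (ENNReal.ofReal (ℓ / p)) • μ₀.restrict (Set.Icc 0 T)
        + (ENNReal.ofReal ((1 - ℓ) / (1 - p))) • μ₀.restrict (Set.Ioi T)) :
    (∀ ν : Measure ℝ, IsProbabilityMeasure ν → ν ≪ μ₀ →
        (ν (Set.Icc 0 T)).toReal = ℓ →
        Integrable (MeasureTheory.llr ν μ₀) (ν.restrict (Set.Icc 0 T)) →
        ℓ * Real.log (ℓ / p) + (1 - ℓ) * Real.log ((1 - ℓ) / (1 - p))
          ≤ collapsedEntropy T ν μ₀)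
    ∧ collapsedEntropy T νstar μ₀
        = ℓ * Real.log (ℓ / p) + (1 - ℓ) * Real.log ((1 - ℓ) / (1 - p))
    ∧ IsProbabilityMeasure νstar
    ∧ νstar ≪ μ₀
    ∧ ∀ t ∈ Set.Icc (0:ℝ) T,
        (νstar (Set.Icc 0 t)).toReal = ℓ * (μ₀ (Set.Icc 0 t)).toReal / p := by
  obtain ⟨hp0, hp1⟩ := hp
  obtain ⟨hℓ0, hℓ1⟩ := hℓ
  set c1 : ENNReal := ENNReal.ofReal (ℓ / p) with hc1
  set c2 : ENNReal := ENNReal.ofReal ((1 - ℓ) / (1 - p)) with hc2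
  have hc1_toReal : c1.toReal = ℓ / p := ENNReal.toReal_ofReal (by positivity)
  have hA : MeasurableSet (Set.Icc (0:ℝ) T) := measurableSet_Icc
  have hμA : μ₀ (Set.Icc 0 T) = ENNReal.ofReal p := by
    rw [← hμT, ENNReal.ofReal_toReal (measure_ne_top _ _)]
  have hμIoi : μ₀ (Set.Ioi T) = ENNReal.ofReal (1 - p) := by
    have hdisj : Disjoint (Set.Icc (0:ℝ) T) (Set.Ioi T) := by
      rw [Set.disjoint_left]
      rintro x ⟨_, hx2⟩ hx3
      exact absurd hx3 (not_lt.mpr hx2)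
    have hunion : Set.Icc (0:ℝ) T ∪ Set.Ioi T = Set.Ici 0 :=
      Set.Icc_union_Ioi_eq_Ici hT.le
    have hIci : μ₀ (Set.Ici (0:ℝ)) = 1 := by
      have := measure_add_measure_compl (μ := μ₀) measurableSet_Iio (s := Set.Iio (0:ℝ))
      rw [hsupp, zero_add, Set.compl_Iio] at this
      simpa using this
    have hsum : μ₀ (Set.Icc 0 T) + μ₀ (Set.Ioi T) = 1 := by
      rw [← measure_union hdisj measurableSet_Ioi, hunion, hIci]
    rw [hμA] at hsum
    have : μ₀ (Set.Ioi T) = 1 - ENNReal.ofReal p := by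
      rw [← hsum]
      rw [ENNReal.add_sub_cancel_left (by simp)]
    rw [this, ← ENNReal.ofReal_one, ← ENNReal.ofReal_sub _ hp0.le]
  -- path formula
  have hpath : ∀ t ∈ Set.Icc (0:ℝ) T,
      νstar (Set.Icc 0 t) = c1 * μ₀ (Set.Icc 0 t) := by
    intro t ht
    have hIcc : MeasurableSet (Set.Icc (0:ℝ) t) := measurableSet_Icc
    rw [hνstar]
    rw [Measure.add_apply, Measure.smul_apply, Measure.smul_apply,
      Measure.restrict_apply hIcc, Measure.restrict_apply hIcc]
    have h1 : Set.Icc (0:ℝ) t ∩ Set.Icc 0 T = Set.Icc 0 t :=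
      Set.inter_eq_left.mpr (Set.Icc_subset_Icc_right ht.2)
    have h2 : Set.Icc (0:ℝ) t ∩ Set.Ioi T = ∅ := by
      rw [Set.eq_empty_iff_forall_notMem]
      rintro x ⟨⟨_, hx2⟩, hx3⟩
      exact absurd hx3 (not_lt.mpr (hx2.trans ht.2))
    rw [h1, h2]
    simp [smul_eq_mul]
  have hpath' : ∀ t ∈ Set.Icc (0:ℝ) T,
      (νstar (Set.Icc 0 t)).toReal = ℓ * (μ₀ (Set.Icc 0 t)).toReal / p := by
    intro t ht
    rw [hpath t ht, ENNReal.toReal_mul, hc1_toReal]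
    ring
  have hνℓ : (νstar (Set.Icc 0 T)).toReal = ℓ := by
    rw [hpath' T ⟨hT.le, le_refl T⟩, hμT]
    field_simp
  -- withDensity representation
  set f : ℝ → ENNReal :=
    (Set.Icc (0:ℝ) T).indicator (fun _ => c1) + (Set.Ioi T).indicator (fun _ => c2) with hf
  have hf_meas : Measurable f :=
    (measurable_const.indicator hA).add (measurable_const.indicator measurableSet_Ioi)
  have hνwd : νstar = μ₀.withDensity f := by
    rw [hf, withDensity_add_left (measurable_const.indicator hA),
      withDensity_indicator hA, withDensity_indicator measurableSet_Ioi,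
      withDensity_const, withDensity_const, hνstar]
  have hac : νstar ≪ μ₀ := by
    rw [hνwd]; exact withDensity_absolutelyContinuous μ₀ f
  have hrn : νstar.rnDeriv μ₀ =ᵐ[μ₀] f := by
    rw [hνwd]; exact Measure.rnDeriv_withDensity μ₀ hf_meas
  -- probability
  have hprob : IsProbabilityMeasure νstar := by
    constructor
    rw [hνstar]
    rw [Measure.add_apply, Measure.smul_apply, Measure.smul_apply,
      Measure.restrict_apply_univ, Measure.restrict_apply_univ, hμA, hμIoi]
    have e1 : c1 * ENNReal.ofReal p = ENNReal.ofReal ℓ := by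
      rw [hc1, ← ENNReal.ofReal_mul (by positivity), div_mul_cancel₀ _ hp0.ne']
    have e2 : c2 * ENNReal.ofReal (1 - p) = ENNReal.ofReal (1 - ℓ) := by
      rw [hc2, ← ENNReal.ofReal_mul (div_nonneg (by linarith) (by linarith)),
        div_mul_cancel₀ _ (by linarith : (1:ℝ) - p ≠ 0)]
    rw [smul_eq_mul, smul_eq_mul, e1, e2, ← ENNReal.ofReal_add hℓ0.le (by linarith)]
    norm_num
  -- entropy value at νstar
  have hentropy : collapsedEntropy T νstar μ₀
      = ℓ * Real.log (ℓ / p) + (1 - ℓ) * Real.log ((1 - ℓ) / (1 - p)) := by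
    have hae : ∀ᵐ x ∂(νstar.restrict (Set.Icc 0 T)),
        llr νstar μ₀ x = Real.log (ℓ / p) := by
      have h1 : ∀ᵐ x ∂(νstar.restrict (Set.Icc 0 T)), νstar.rnDeriv μ₀ x = f x :=
        ae_restrict_of_ae (hac.ae_le hrn)
      filter_upwards [h1, ae_restrict_mem hA] with x hx hmem
      have hfx : f x = c1 := by
        have hnot : x ∉ Set.Ioi T := not_lt.mpr hmem.2
        simp [hf, Set.indicator_of_mem hmem, Set.indicator_of_notMem hnot]
      rw [llr, hx, hfx, hc1_toReal]
    calc collapsedEntropy T νstar μ₀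
        = (∫ x in Set.Icc 0 T, llr νstar μ₀ x ∂νstar)
          + (1 - (νstar (Set.Icc 0 T)).toReal)
            * Real.log ((1 - (νstar (Set.Icc 0 T)).toReal)
              / (1 - (μ₀ (Set.Icc 0 T)).toReal)) := rfl
      _ = ℓ * Real.log (ℓ / p) + (1 - ℓ) * Real.log ((1 - ℓ) / (1 - p)) := by
          rw [integral_congr_ae hae, integral_const, hνℓ, hμT,
            measureReal_def, Measure.restrict_apply_univ, hνℓ, smul_eq_mul]
  refine ⟨?_, hentropy, hprob, hac, hpath'⟩
  intro ν hνprob hνac hνT hint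
  unfold collapsedEntropy
  rw [hνT, hμT]
  exact add_le_add_left
    (key_gibbs ν μ₀ hνac (Set.Icc 0 T) hℓ0 hp0 hνT hμT hint) _
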